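/- The function φ is differentiable on (-∞,-1) and satisfies the identity φ'(z)·z·(1 + φ(z)) = (1 + z)·φ(z) for all z < -1; equivalently, φ'(z) = (1+z)φ(z) / (z(1+φ(z))). -/

import Mathlib

open Real

theorem stmt_9 (φ : ℝ → ℝ)
    (hφ : ∀ z : ℝ, z < -1 → φ z ∈ Set.Ioo (-1 : ℝ) 0 ∧ φ z * Real.exp (φ z) = z * Real.exp z) :
    ∀ z : ℝ, z < -1 →
      DifferentiableAt ℝ φ z ∧
      deriv φ z * z * (1 + φ z) = (1 + z) * φ z ∧
      deriv φ z = (1 + z) * φ z / (z * (1 + φ z)) := by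
  set f : ℝ → ℝ := fun x => x * Real.exp x with hf
  have hfd : ∀ x : ℝ, HasStrictDerivAt f ((1 + x) * Real.exp x) x := by
    intro x
    have : HasStrictDerivAt (fun y : ℝ => y * Real.exp y) (1 * Real.exp x + x * Real.exp x) x :=
      (hasStrictDerivAt_id x).mul (Real.hasStrictDerivAt_exp x)
    convert this using 1
    ring
  have hinj : Set.InjOn f (Set.Ioo (-1 : ℝ) 0) := by
    have hmono : StrictMonoOn f (Set.Ioo (-1 : ℝ) 0) := by
      apply strictMonoOn_of_deriv_pos (convex_Ioo _ _)
      · exact (continuous_id.mul Real.continuous_exp).continuousOn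
      · intro x hx
        rw [interior_Ioo] at hx
        rw [(hfd x).hasDerivAt.deriv]
        have : (0:ℝ) < 1 + x := by linarith [hx.1]
        positivity
    exact hmono.injOn
  intro z hz
  obtain ⟨hw, hfe⟩ := hφ z hz
  set w := φ z with hwdef
  have hW := hfd w
  have hW' : (1 + w) * Real.exp w ≠ 0 := by
    have : (0:ℝ) < 1 + w := by linarith [hw.1]
    positivity
  set g := hW.localInverse f _ w hW' with hg
  have hfw : f w = f z := hfe
  -- eventual equality of φ and g ∘ f near z
  have hE1 : ∀ᶠ y in nhds (f w), f (g y) = y :=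
    (hW.hasStrictFDerivAt_equiv hW').eventually_right_inverse
  have hgc : ContinuousAt g (f w) :=
    (hW.hasStrictFDerivAt_equiv hW').localInverse_continuousAt
  have hgw : g (f w) = w :=
    (hW.hasStrictFDerivAt_equiv hW').localInverse_apply_image
  have hE2 : ∀ᶠ y in nhds (f w), g y ∈ Set.Ioo (-1 : ℝ) 0 := by
    have hmem : g (f w) ∈ Set.Ioo (-1:ℝ) 0 := by rw [hgw]; exact hw
    exact hgc.eventually_mem (isOpen_Ioo.mem_nhds hmem)
  have hfc : ContinuousAt f z := ((hfd z).hasDerivAt.differentiableAt).continuousAt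
  have hEz : ∀ᶠ x in nhds z, f (g (f x)) = f x ∧ g (f x) ∈ Set.Ioo (-1:ℝ) 0 := by
    exact hfc (by rw [hfw] at hE1 hE2; exact hE1.and hE2)
  have hlt : ∀ᶠ x in nhds z, x < -1 := Filter.Tendsto.eventually_lt_const hz Filter.tendsto_id
  have heq : φ =ᶠ[nhds z] fun x => g (f x) := by
    filter_upwards [hEz, hlt] with x ⟨h1, h2⟩ hx
    obtain ⟨hwx, hfx⟩ := hφ x hx
    exact hinj hwx h2 (by rw [h1]; exact hfx)
  -- derivative
  have hgD : HasStrictDerivAt g (((1 + w) * Real.exp w)⁻¹) (f z) := by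
    rw [← hfw]; exact hW.to_localInverse hW'
  have hcomp : HasStrictDerivAt (fun x => g (f x)) (((1 + w) * Real.exp w)⁻¹ * ((1 + z) * Real.exp z)) z :=
    hgD.comp z (hfd z)
  have hD : HasDerivAt φ (((1 + w) * Real.exp w)⁻¹ * ((1 + z) * Real.exp z)) z :=
    (hcomp.hasDerivAt).congr_of_eventuallyEq heq
  have hderiv : deriv φ z = ((1 + w) * Real.exp w)⁻¹ * ((1 + z) * Real.exp z) := hD.deriv
  have hz0 : z ≠ 0 := by linarith
  have h1w : (1:ℝ) + w ≠ 0 := by have := hw.1; intro h; linarith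
  have hew : Real.exp w ≠ 0 := (Real.exp_pos w).ne'
  refine ⟨hD.differentiableAt, ?_, ?_⟩
  · rw [hderiv]
    field_simp
    linear_combination (-(1+z)) * hfe
  · rw [hderiv]
    have h1wz : z * (1 + w) ≠ 0 := mul_ne_zero hz0 h1w
    field_simp
    linear_combination (-(1+z)) * hfe
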